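/- Let α ≥ 0 be a real number. The function (u_1,…,u_m) ↦ (u_1⋯u_k)^{−α(m+1)/(k+1)} · (1+u_1+…+u_m)^{−(1−α)(m+1)} is Lebesgue-integrable on (0,∞)^m if and only if α < (k+1)/(m+1). -/

import Mathlib

open MeasureTheory Finset Set Real
open scoped ENNReal NNReal

lemma myIntegrable_comp_abs {f : ℝ → ℝ} (hf : IntegrableOn f (Set.Ioi 0)) :
    Integrable (fun x : ℝ => f |x|) := by
  have hf' : IntegrableOn (fun x : ℝ => f |x|) (Set.Ioi 0) :=
    hf.congr_fun (fun x hx => by rw [abs_of_pos hx]) measurableSet_Ioi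
  have int_Iic : IntegrableOn (fun x : ℝ => f |x|) (Set.Iic 0) := by
    rw [← Measure.map_neg_eq_self (volume : Measure ℝ)]
    have m : MeasurableEmbedding fun x : ℝ => -x := (Homeomorph.neg ℝ).measurableEmbedding
    rw [m.integrableOn_map_iff]
    simp_rw [Function.comp_def, abs_neg, neg_preimage, neg_Iic, neg_zero]
    exact (integrableOn_Ici_iff_integrableOn_Ioi).mpr hf'
  have := int_Iic.union hf'
  rwa [Set.Iic_union_Ioi, integrableOn_univ] at this

lemma myInt1 {a β : ℝ} (ha1 : a < 1) (hβ : 0 < β) (hab : 1 < a + β) :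
    Integrable (fun x : ℝ => |x| ^ (-a) * (1 + |x|) ^ (-β)) := by
  have hmeas : Measurable fun x : ℝ => x ^ (-a) * (1 + x) ^ (-β) := by fun_prop
  apply myIntegrable_comp_abs (f := fun x : ℝ => x ^ (-a) * (1 + x) ^ (-β))
  have h1 : IntegrableOn (fun x : ℝ => x ^ (-a) * (1 + x) ^ (-β)) (Set.Ioc 0 1) := by
    have hb : IntegrableOn (fun x : ℝ => x ^ (-a)) (Set.Ioc 0 1) := by
      have := intervalIntegral.intervalIntegrable_rpow' (a := 0) (b := 1) (r := -a)
        (by linarith)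
      rwa [intervalIntegrable_iff_integrableOn_Ioc_of_le zero_le_one] at this
    apply Integrable.mono' hb hmeas.aestronglyMeasurable.restrict
    filter_upwards [ae_restrict_mem measurableSet_Ioc] with x hx
    have hx0 : (0:ℝ) < x := hx.1
    rw [Real.norm_eq_abs, abs_of_nonneg (mul_nonneg (rpow_nonneg hx0.le _)
      (rpow_nonneg (by linarith) _))]
    exact mul_le_of_le_one_right (rpow_nonneg hx0.le _)
      (rpow_le_one_of_one_le_of_nonpos (by linarith) (by linarith))
  have h2 : IntegrableOn (fun x : ℝ => x ^ (-a) * (1 + x) ^ (-β)) (Set.Ioi 1) := by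
    have hb : IntegrableOn (fun x : ℝ => x ^ (-(a + β))) (Set.Ioi 1) :=
      integrableOn_Ioi_rpow_of_lt (by linarith) zero_lt_one
    apply Integrable.mono' hb hmeas.aestronglyMeasurable.restrict
    filter_upwards [ae_restrict_mem measurableSet_Ioi] with x hx
    have hx0 : (0:ℝ) < x := lt_trans one_pos hx
    rw [Real.norm_eq_abs, abs_of_nonneg (mul_nonneg (rpow_nonneg hx0.le _)
      (rpow_nonneg (by linarith) _))]
    calc x ^ (-a) * (1 + x) ^ (-β) ≤ x ^ (-a) * x ^ (-β) :=
          mul_le_mul_of_nonneg_left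
            (Real.rpow_le_rpow_of_nonpos hx0 (by linarith) (by linarith))
            (rpow_nonneg hx0.le _)
      _ = x ^ (-(a + β)) := by rw [← Real.rpow_add hx0]; ring_nf
  have := h1.union h2
  rwa [Set.Ioc_union_Ioi_eq_Ioi zero_le_one] at this

lemma myInt2 {β : ℝ} (hβ : 1 < β) : Integrable (fun x : ℝ => (1 + |x|) ^ (-β)) := by
  have := integrable_one_add_norm (E := ℝ) (μ := volume) (r := β)
    (by rw [Module.finrank_self]; exact_mod_cast hβ)
  simpa [Real.norm_eq_abs] using this

lemma card_filt (m k : ℕ) (hkm : k ≤ m) :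
    (Finset.univ.filter (fun i : Fin m => (i : ℕ) < k)).card = k := by
  induction k with
  | zero => simp
  | succ n ih =>
    have h1 : n ≤ m := by omega
    have hnm : n < m := by omega
    have he : Finset.univ.filter (fun i : Fin m => (i : ℕ) < n + 1)
        = insert (⟨n, hnm⟩ : Fin m) (Finset.univ.filter (fun i : Fin m => (i : ℕ) < n)) := by
      ext i
      simp [Fin.ext_iff]
      omega
    rw [he, Finset.card_insert_of_notMem (by simp), ih h1]

theorem stmt18 (m k : ℕ) (hm : 2 ≤ m) (hk : 1 ≤ k) (hkm : k ≤ m - 1)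
    (α : ℝ) (hα : 0 ≤ α) :
    MeasureTheory.IntegrableOn
      (fun u : Fin m → ℝ =>
        (∏ i ∈ Finset.univ.filter (fun i : Fin m => (i : ℕ) < k), u i) ^
            (-(α * ((m : ℝ) + 1) / ((k : ℝ) + 1))) *
          (1 + ∑ i, u i) ^ (-((1 - α) * ((m : ℝ) + 1))))
      {u : Fin m → ℝ | ∀ i, 0 < u i} ↔
    α < ((k : ℝ) + 1) / ((m : ℝ) + 1) := by
  haveI : NeZero m := ⟨by omega⟩
  have hkm' : k < m := by omega
  have hm1 : (0:ℝ) < (m:ℝ) + 1 := by positivity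
  have hk1 : (0:ℝ) < (k:ℝ) + 1 := by positivity
  have hmR : (0:ℝ) < (m:ℝ) := by exact_mod_cast (by omega : 0 < m)
  have hkmR : (k:ℝ) + 1 ≤ (m:ℝ) + 1 := by
    have : (k:ℝ) ≤ (m:ℝ) := by exact_mod_cast hkm'.le
    linarith
  set a : ℝ := α * ((m : ℝ) + 1) / ((k : ℝ) + 1) with ha_def
  set b : ℝ := (1 - α) * ((m : ℝ) + 1) with hb_def
  have ha0 : 0 ≤ a := by positivity
  have hak : a * ((k:ℝ)+1) = α * ((m:ℝ)+1) := by
    rw [ha_def]; field_simp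
  have hiff : α < ((k : ℝ) + 1) / ((m : ℝ) + 1) ↔ a < 1 := by
    rw [ha_def, div_lt_one hk1, lt_div_iff₀ hm1]
  rw [hiff]
  set S : Set (Fin m → ℝ) := {u : Fin m → ℝ | ∀ i, 0 < u i} with hS_def
  have hSmeas : MeasurableSet S := by
    have : S = ⋂ i, (fun u : Fin m → ℝ => u i) ⁻¹' Set.Ioi 0 := by
      rw [hS_def]; ext u; simp [Set.mem_iInter]
    rw [this]
    exact MeasurableSet.iInter fun i => (measurable_pi_apply i) measurableSet_Ioi
  have hfm : Measurable (fun u : Fin m → ℝ =>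
      (∏ i ∈ Finset.univ.filter (fun i : Fin m => (i : ℕ) < k), u i) ^ (-a) *
        (1 + ∑ i, u i) ^ (-b)) := by fun_prop
  constructor
  · -- forward: integrable → a < 1
    intro h
    by_contra hge
    push_neg at hge
    -- hge : 1 ≤ a
    set c : ℝ := min (((m:ℝ) + 1) ^ (-b)) 1 with hc_def
    have hc : 0 < c := lt_min (Real.rpow_pos_of_pos hm1 _) one_pos
    set I : ℕ → Set ℝ := fun n => Set.Ioo (((2:ℝ) ^ (n+1))⁻¹) (((2:ℝ) ^ n)⁻¹) with hI_def
    set B : ℕ → Set (Fin m → ℝ) :=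
      fun n => Set.univ.pi (fun i : Fin m => if i = 0 then I n else Set.Ioo 0 1) with hB_def
    have hpow_pos : ∀ n : ℕ, (0:ℝ) < 2 ^ n := fun n => by positivity
    have hinv_le_one : ∀ n : ℕ, ((2:ℝ) ^ n)⁻¹ ≤ 1 := by
      intro n
      rw [inv_le_one_iff₀]
      right
      exact one_le_pow₀ (by norm_num)
    have hBS : ∀ n, B n ⊆ S := by
      intro n u hu i
      have hi : u i ∈ (if i = 0 then I n else Set.Ioo 0 1) := hu i (Set.mem_univ i)
      rcases eq_or_ne i 0 with rfl | hne
      · rw [if_pos rfl] at hi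
        exact lt_trans (by positivity) hi.1
      · rw [if_neg hne] at hi
        exact hi.1
    have hBmeas : ∀ n, MeasurableSet (B n) := by
      intro n
      apply MeasurableSet.univ_pi
      intro i
      split_ifs <;> exact measurableSet_Ioo
    have key : ∀ n n' : ℕ, n < n' → ∀ u, u ∈ B n → u ∈ B n' → False := by
      intro n n' hlt u hn hn'
      have h1 : u 0 ∈ (if (0 : Fin m) = 0 then I n else Set.Ioo 0 1) := hn 0 (Set.mem_univ 0)
      have h2 : u 0 ∈ (if (0 : Fin m) = 0 then I n' else Set.Ioo 0 1) := hn' 0 (Set.mem_univ 0)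
      rw [if_pos rfl] at h1 h2
      have hle : ((2:ℝ) ^ n')⁻¹ ≤ ((2:ℝ) ^ (n+1))⁻¹ := by
        apply inv_anti₀ (by positivity)
        exact pow_le_pow_right₀ (by norm_num) hlt
      have := h1.1
      have := h2.2
      linarith
    have hdisj : Pairwise (Function.onFun Disjoint B) := by
      intro n n' hne
      rw [Function.onFun, Set.disjoint_left]
      intro u hn hn'
      rcases hne.lt_or_gt with hlt | hlt
      · exact key _ _ hlt u hn hn'
      · exact key _ _ hlt u hn' hn
    have hlow : ∀ n : ℕ, ∀ u ∈ B n, (2:ℝ) ^ n * c ≤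
        (∏ i ∈ Finset.univ.filter (fun i : Fin m => (i : ℕ) < k), u i) ^ (-a) *
          (1 + ∑ i, u i) ^ (-b) := by
      intro n u huB
      have hu0 : u 0 ∈ (if (0 : Fin m) = 0 then I n else Set.Ioo 0 1) := huB 0 (Set.mem_univ 0)
      rw [if_pos rfl] at hu0
      have hui : ∀ i, 0 < u i ∧ u i ≤ 1 := by
        intro i
        rcases eq_or_ne i 0 with rfl | hne
        · exact ⟨lt_trans (by positivity) hu0.1, hu0.2.le.trans (hinv_le_one n)⟩
        · have : u i ∈ (if i = 0 then I n else Set.Ioo 0 1) := huB i (Set.mem_univ i)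
          rw [if_neg hne] at this
          exact ⟨this.1, this.2.le⟩
      have h0mem : (0 : Fin m) ∈ Finset.univ.filter (fun i : Fin m => (i : ℕ) < k) := by
        simp only [Finset.mem_filter, Finset.mem_univ, true_and, Fin.val_zero]
        omega
      have hP : ∏ i ∈ Finset.univ.filter (fun i : Fin m => (i : ℕ) < k), u i ≤ u 0 := by
        rw [← Finset.mul_prod_erase _ _ h0mem]
        exact mul_le_of_le_one_right (hui 0).1.le
          (Finset.prod_le_one (fun i _ => (hui i).1.le) (fun i _ => (hui i).2))
      have hPpos : 0 < ∏ i ∈ Finset.univ.filter (fun i : Fin m => (i : ℕ) < k), u i :=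
        Finset.prod_pos fun i _ => (hui i).1
      have h1 : (2:ℝ) ^ n ≤
          (∏ i ∈ Finset.univ.filter (fun i : Fin m => (i : ℕ) < k), u i) ^ (-a) := by
        have e1 := Real.rpow_le_rpow_of_nonpos hPpos hP (neg_nonpos.mpr (by linarith : (0:ℝ) ≤ a))
        have e2 := Real.rpow_le_rpow_of_nonpos (hui 0).1 hu0.2.le
          (neg_nonpos.mpr (by linarith : (0:ℝ) ≤ a))
        have e3 : (((2:ℝ) ^ n)⁻¹) ^ (-a) = ((2:ℝ) ^ n) ^ a := by
          rw [Real.inv_rpow (by positivity), Real.rpow_neg (by positivity), inv_inv]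
        have e4 : ((2:ℝ) ^ n) ^ (1:ℝ) ≤ ((2:ℝ) ^ n) ^ a :=
          Real.rpow_le_rpow_of_exponent_le (one_le_pow₀ (by norm_num)) hge
        rw [Real.rpow_one] at e4
        rw [e3] at e2
        linarith
      have hsum_le : ∑ i, u i ≤ (m:ℝ) := by
        calc ∑ i, u i ≤ ∑ _i : Fin m, (1:ℝ) := Finset.sum_le_sum fun i _ => (hui i).2
          _ = (m:ℝ) := by simp
      have hQ0 : (0:ℝ) ≤ ∑ i, u i := Finset.sum_nonneg fun i _ => (hui i).1.le
      have hQc : c ≤ (1 + ∑ i, u i) ^ (-b) := by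
        rcases le_or_gt 0 b with hb | hb
        · have : ((m:ℝ) + 1) ^ (-b) ≤ (1 + ∑ i, u i) ^ (-b) :=
            Real.rpow_le_rpow_of_nonpos (by linarith) (by linarith) (neg_nonpos.mpr hb)
          exact le_trans (min_le_left _ _) this
        · have h1 : (1 + ∑ i, u i) ^ (0:ℝ) ≤ (1 + ∑ i, u i) ^ (-b) :=
            Real.rpow_le_rpow_of_exponent_le (by linarith) (by linarith)
          rw [Real.rpow_zero] at h1
          exact le_trans (min_le_right _ _) h1
      exact mul_le_mul h1 hQc hc.le (rpow_nonneg hPpos.le _)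
    have hvol : ∀ n : ℕ, volume (B n) = ENNReal.ofReal (((2:ℝ) ^ (n+1))⁻¹) := by
      intro n
      rw [hB_def]
      rw [volume_pi_pi]
      have : (fun i : Fin m => volume (if i = 0 then I n else Set.Ioo (0:ℝ) 1)) =
          fun i : Fin m => if i = 0 then ENNReal.ofReal (((2:ℝ) ^ (n+1))⁻¹) else 1 := by
        funext i
        split_ifs with hi
        · rw [hI_def]
          simp only [Real.volume_Ioo]
          congr 1
          rw [pow_succ]
          field_simp
          ring
        · simp [Real.volume_Ioo]
      rw [this, Finset.prod_ite_eq' Finset.univ (0 : Fin m)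
        (fun _ => ENNReal.ofReal (((2:ℝ) ^ (n+1))⁻¹))]
      simp
    have hfin := h.2
    rw [HasFiniteIntegral] at hfin
    have hchain : (⊤ : ℝ≥0∞) ≤ ∫⁻ u in S,
        ‖(∏ i ∈ Finset.univ.filter (fun i : Fin m => (i : ℕ) < k), u i) ^ (-a) *
          (1 + ∑ i, u i) ^ (-b)‖₊ := by
      have hn : ∀ n : ℕ, ENNReal.ofReal (c / 2) ≤ ∫⁻ u in B n,
          ‖(∏ i ∈ Finset.univ.filter (fun i : Fin m => (i : ℕ) < k), u i) ^ (-a) *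
            (1 + ∑ i, u i) ^ (-b)‖₊ := by
        intro n
        have hstep : ENNReal.ofReal ((2:ℝ) ^ n * c) * volume (B n) ≤ ∫⁻ u in B n,
            ‖(∏ i ∈ Finset.univ.filter (fun i : Fin m => (i : ℕ) < k), u i) ^ (-a) *
              (1 + ∑ i, u i) ^ (-b)‖₊ := by
          rw [← setLIntegral_const (B n) (ENNReal.ofReal ((2:ℝ) ^ n * c))]
          apply setLIntegral_mono hfm.nnnorm.coe_nnreal_ennreal
          intro x hx
          exact le_trans (ENNReal.ofReal_le_ofReal (hlow n x hx)) (Real.ofReal_le_enorm _)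
        calc ENNReal.ofReal (c / 2)
            = ENNReal.ofReal ((2:ℝ) ^ n * c) * ENNReal.ofReal (((2:ℝ) ^ (n+1))⁻¹) := by
              rw [← ENNReal.ofReal_mul (by positivity)]
              congr 1
              rw [pow_succ]
              field_simp
          _ ≤ _ := by rw [← hvol n]; exact hstep
      calc (⊤ : ℝ≥0∞) = ∑' _ : ℕ, ENNReal.ofReal (c / 2) :=
            (ENNReal.tsum_const_eq_top_of_ne_zero
              (by simp only [ne_eq, ENNReal.ofReal_eq_zero, not_le]; positivity)).symm
        _ ≤ ∑' n : ℕ, ∫⁻ u in B n,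
            ‖(∏ i ∈ Finset.univ.filter (fun i : Fin m => (i : ℕ) < k), u i) ^ (-a) *
              (1 + ∑ i, u i) ^ (-b)‖₊ := ENNReal.tsum_le_tsum hn
        _ = ∫⁻ u in ⋃ n, B n,
            ‖(∏ i ∈ Finset.univ.filter (fun i : Fin m => (i : ℕ) < k), u i) ^ (-a) *
              (1 + ∑ i, u i) ^ (-b)‖₊ := (lintegral_iUnion hBmeas hdisj _).symm
        _ ≤ _ := lintegral_mono_set (Set.iUnion_subset hBS)
    exact lt_irrefl _ (lt_of_lt_of_le hfin hchain)
  · -- reverse: a < 1 → integrable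
    intro ha1
    have hα1 : α < 1 := lt_of_lt_of_le (hiff.mpr ha1) (by rw [div_le_one hm1]; exact hkmR)
    have hb0 : 0 < b := by rw [hb_def]; exact mul_pos (by linarith) hm1
    have hb_eq : b = (m:ℝ) + 1 - a * ((k:ℝ)+1) := by rw [hb_def]; linear_combination hak
    set ε : ℝ := (1 - a) / m with hε_def
    have hε : 0 < ε := div_pos (by linarith) hmR
    have hmε : (m:ℝ) * ε = 1 - a := by rw [hε_def]; field_simp
    set β : Fin m → ℝ := fun i => if (i : ℕ) < k then (1 - a) + ε else 1 + ε with hβ_def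
    have hβpos : ∀ i, 0 < β i := by
      intro i
      by_cases h : (i : ℕ) < k <;> simp only [hβ_def, h, if_true, if_false] <;> linarith
    have hsum : ∑ i, β i ≤ b := by
      rw [hβ_def]
      rw [Finset.sum_ite, Finset.sum_const, Finset.sum_const, Finset.filter_not,
        Finset.card_sdiff_of_subset (Finset.filter_subset _ _), Finset.card_univ, Fintype.card_fin,
        card_filt m k hkm'.le, nsmul_eq_mul, nsmul_eq_mul]
      apply le_of_eq
      rw [hb_eq]
      push_cast [Nat.cast_sub hkm'.le]
      linear_combination hmε
    set g : Fin m → ℝ → ℝ := fun i x =>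
      (if (i : ℕ) < k then |x| ^ (-a) else 1) * (1 + |x|) ^ (-(β i)) with hg_def
    have hg : ∀ i, Integrable (g i) := by
      intro i
      by_cases h : (i : ℕ) < k
      · have : 1 < a + β i := by simp only [hβ_def, h, if_true]; linarith
        simpa [hg_def, h] using myInt1 ha1 (hβpos i) this
      · have : (1:ℝ) < β i := by simp only [hβ_def, h, if_false]; linarith
        simpa [hg_def, h] using myInt2 this
    have hG : Integrable (fun u : Fin m → ℝ => ∏ i, g i (u i)) :=
      Integrable.fintype_prod (𝕜 := ℝ) hg
    rw [IntegrableOn]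
    apply Integrable.mono' hG.integrableOn hfm.aestronglyMeasurable.restrict
    filter_upwards [ae_restrict_mem hSmeas] with u hu
    have hu : ∀ i, 0 < u i := hu
    have hP : 0 < ∏ i ∈ Finset.univ.filter (fun i : Fin m => (i : ℕ) < k), u i :=
      Finset.prod_pos fun i _ => hu i
    have hQ0 : 0 ≤ ∑ i, u i := Finset.sum_nonneg fun i _ => (hu i).le
    have hQ1 : (1:ℝ) ≤ 1 + ∑ i, u i := by linarith
    rw [Real.norm_eq_abs, abs_of_nonneg (mul_nonneg (rpow_nonneg hP.le _)
      (rpow_nonneg (by linarith) _))]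
    have hQpos : (0:ℝ) < 1 + ∑ i, u i := by linarith
    have key : (1 + ∑ i, u i) ^ (-b) ≤ ∏ i, (1 + u i) ^ (-(β i)) := by
      have step : ∏ i, (1 + u i) ^ (β i) ≤ (1 + ∑ i, u i) ^ b := by
        calc ∏ i, (1 + u i) ^ (β i) ≤ ∏ i, (1 + ∑ j, u j) ^ (β i) := by
              apply Finset.prod_le_prod (fun i _ => rpow_nonneg (by linarith [hu i]) _)
              intro i _
              apply Real.rpow_le_rpow (by linarith [hu i]) _ (hβpos i).le
              have : u i ≤ ∑ j, u j := Finset.single_le_sum (fun j _ => (hu j).le) (mem_univ i)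
              linarith
          _ = (1 + ∑ j, u j) ^ (∑ i, β i) := (Real.rpow_sum_of_pos hQpos _ _).symm
          _ ≤ (1 + ∑ j, u j) ^ b := Real.rpow_le_rpow_of_exponent_le hQ1 hsum
      have hprodpos : 0 < ∏ i, (1 + u i) ^ (β i) :=
        Finset.prod_pos fun i _ => Real.rpow_pos_of_pos (by linarith [hu i]) _
      calc (1 + ∑ i, u i) ^ (-b) = ((1 + ∑ i, u i) ^ b)⁻¹ := Real.rpow_neg hQpos.le b
        _ ≤ (∏ i, (1 + u i) ^ (β i))⁻¹ := inv_anti₀ hprodpos step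
        _ = ∏ i, ((1 + u i) ^ (β i))⁻¹ := by rw [← Finset.prod_inv_distrib]
        _ = ∏ i, (1 + u i) ^ (-(β i)) := by
            apply Finset.prod_congr rfl
            intro i _
            rw [Real.rpow_neg (by linarith [hu i])]
    have hexp : ∏ i, g i (u i) =
        ((∏ i ∈ Finset.univ.filter (fun i : Fin m => (i : ℕ) < k), u i) ^ (-a)) *
          ∏ i, (1 + u i) ^ (-(β i)) := by
      rw [hg_def]
      rw [Finset.prod_mul_distrib]
      congr 1
      · rw [← Finset.prod_filter]
        rw [← Real.finset_prod_rpow _ _ (fun i _ => (hu i).le) (-a)]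
        apply Finset.prod_congr rfl
        intro i _
        rw [abs_of_pos (hu i)]
      · apply Finset.prod_congr rfl
        intro i _
        rw [abs_of_pos (hu i)]
    rw [hexp]
    exact mul_le_mul_of_nonneg_left key (rpow_nonneg hP.le _)
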